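/- The Schwinger term s(X,Y) = Tr(X₊₋Y₋₊ − Y₊₋X₋₊) is a Lie algebra 2-cocycle on the Lie algebra u_res(H) of bounded skew-adjoint operators with Hilbert–Schmidt off-diagonal blocks: it is bilinear, antisymmetric, and satisfies s([X,Y],Z) + s([Y,Z],X) + s([Z,X],Y) = 0 for all X, Y, Z in u_res(H). -/

import Mathlib

open scoped InnerProductSpace

noncomputable section

/-- A bounded operator between Hilbert spaces is Hilbert–Schmidt if the sum of squared
norms of the images of some Hilbert basis converges. -/
def IsHilbertSchmidt {E F : Type*} [NormedAddCommGroup E] [InnerProductSpace ℂ E]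
    [NormedAddCommGroup F] [InnerProductSpace ℂ F] (A : E →L[ℂ] F) : Prop :=
  ∃ (ι : Type) (b : HilbertBasis ι ℂ E), Summable fun i => ‖A (b i)‖ ^ 2

/-- The trace of an operator computed with respect to a Hilbert basis. -/
def traceB {H : Type*} [NormedAddCommGroup H] [InnerProductSpace ℂ H]
    {ι : Type*} (b : HilbertBasis ι ℂ H) (A : H →L[ℂ] H) : ℂ :=
  ∑' i, ⟪b i, A (b i)⟫_ℂ

/-- The Schwinger term `s(X,Y) = Tr(X₊₋Y₋₊ − Y₊₋X₋₊)` relative to a projection `P` and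
a Hilbert basis `b`. -/
def schwinger {H : Type*} [NormedAddCommGroup H] [InnerProductSpace ℂ H]
    {ι : Type*} (b : HilbertBasis ι ℂ H) (P : H →L[ℂ] H) (X Y : H →L[ℂ] H) : ℂ :=
  traceB b ((P * X * (1 - P)) * ((1 - P) * Y * P) - (P * Y * (1 - P)) * ((1 - P) * X * P))

/-- The predicate that `X` belongs to `u_res(H)`: `X` is skew-adjoint and its commutator
with `P₊` (equivalently, its off-diagonal blocks) is Hilbert–Schmidt. -/
def MemURes {H : Type*} [NormedAddCommGroup H] [InnerProductSpace ℂ H] [CompleteSpace H]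
    (P X : H →L[ℂ] H) : Prop :=
  star X = -X ∧ IsHilbertSchmidt (X * P - P * X)

set_option linter.unusedSectionVars false
set_option linter.unusedVariables false
set_option maxHeartbeats 1000000

section Lemmas

variable {H : Type*} [NormedAddCommGroup H] [InnerProductSpace ℂ H] [CompleteSpace H]

def HSb {ι : Type*} (b : HilbertBasis ι ℂ H) (A : H →L[ℂ] H) : Prop :=
  Summable fun i => ‖A (b i)‖ ^ 2

lemma parseval {ι : Type*} (b : HilbertBasis ι ℂ H) (x : H) :
    HasSum (fun i => ‖⟪b i, x⟫_ℂ‖ ^ 2) (‖x‖ ^ 2) := by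
  have h := b.hasSum_inner_mul_inner x x
  have h2 : HasSum (fun i => ((‖⟪b i, x⟫_ℂ‖ ^ 2 : ℝ) : ℂ)) ((‖x‖ ^ 2 : ℝ) : ℂ) := by
    convert h using 2 with i
    · rfl
    · rw [← inner_conj_symm x (b i), Complex.conj_mul']
      norm_cast
    · rw [inner_self_eq_norm_sq_to_K]
      norm_cast
  exact Complex.hasSum_ofReal.mp h2

set_option linter.unusedSectionVars false
set_option maxHeartbeats 1000000

lemma hsb_adjoint {ι κ : Type*} (b : HilbertBasis ι ℂ H) (c : HilbertBasis κ ℂ H)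
    {A : H →L[ℂ] H} (hA : HSb b A) : HSb c (ContinuousLinearMap.adjoint A) := by
  classical
  -- f (i, j) = ‖⟪c j, A (b i)⟫‖ ^ 2
  set f : ι × κ → ℝ := fun p => ‖⟪c p.2, A (b p.1)⟫_ℂ‖ ^ 2 with hf
  have hf0 : 0 ≤ f := fun p => sq_nonneg _
  have hsf : Summable f := by
    rw [summable_prod_of_nonneg hf0]
    constructor
    · intro i; exact (parseval c (A (b i))).summable
    · have : (fun i => ∑' j, f (i, j)) = fun i => ‖A (b i)‖ ^ 2 := by
        ext i; exact (parseval c (A (b i))).tsum_eq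
      rw [this]; exact hA
  have hsw : Summable fun p : κ × ι => f (p.2, p.1) :=
    (Equiv.prodComm κ ι).summable_iff.mpr hsf
  have := (summable_prod_of_nonneg (fun p : κ × ι => hf0 _)).mp hsw
  have key : (fun j => ∑' i, f (i, j)) = fun j => ‖(ContinuousLinearMap.adjoint A) (c j)‖ ^ 2 := by
    ext j
    have h1 : (fun i => f (i, j)) = fun i => ‖⟪b i, (ContinuousLinearMap.adjoint A) (c j)⟫_ℂ‖ ^ 2 := by
      ext i
      rw [hf]
      simp only
      rw [← ContinuousLinearMap.adjoint_inner_left A (b i) (c j), norm_inner_symm]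
    rw [show (∑' i, f (i, j)) = ∑' i, ‖⟪b i, (ContinuousLinearMap.adjoint A) (c j)⟫_ℂ‖ ^ 2 by
      exact tsum_congr (fun i => congrFun h1 i)]
    exact (parseval b _).tsum_eq
  have := this.2
  rw [key] at this
  exact this

lemma hsb_congr {ι κ : Type*} (b : HilbertBasis ι ℂ H) (c : HilbertBasis κ ℂ H)
    {A : H →L[ℂ] H} (hA : HSb b A) : HSb c A := by
  have h1 := hsb_adjoint b c hA
  have h2 := hsb_adjoint c c h1
  rwa [ContinuousLinearMap.adjoint_adjoint] at h2

lemma hsb_left_mul {ι : Type*} (b : HilbertBasis ι ℂ H) {A : H →L[ℂ] H}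
    (hA : HSb b A) (B : H →L[ℂ] H) : HSb b (B * A) := by
  refine Summable.of_nonneg_of_le (fun i => sq_nonneg _) (fun i => ?_) (hA.mul_left (‖B‖ ^ 2))
  rw [ContinuousLinearMap.mul_apply]
  calc ‖B (A (b i))‖ ^ 2 ≤ (‖B‖ * ‖A (b i)‖) ^ 2 := by
        apply pow_le_pow_left₀ (norm_nonneg _) (B.le_opNorm _)
    _ = ‖B‖ ^ 2 * ‖A (b i)‖ ^ 2 := by ring

lemma hsb_star {ι : Type*} (b : HilbertBasis ι ℂ H) {A : H →L[ℂ] H}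
    (hA : HSb b A) : HSb b (star A) := by
  rw [ContinuousLinearMap.star_eq_adjoint]
  exact hsb_adjoint b b hA

lemma hsb_right_mul {ι : Type*} (b : HilbertBasis ι ℂ H) {A : H →L[ℂ] H}
    (hA : HSb b A) (B : H →L[ℂ] H) : HSb b (A * B) := by
  have h1 : HSb b (star B * star A) := hsb_left_mul b (hsb_star b hA) (star B)
  have h2 := hsb_star b h1
  rwa [star_mul, star_star, star_star] at h2


lemma diag_summable {ι : Type*} (b : HilbertBasis ι ℂ H) {A B : H →L[ℂ] H}
    (hA : HSb b A) (hB : HSb b B) :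
    Summable fun i => ⟪b i, (A * B) (b i)⟫_ℂ := by
  have hA' : HSb b (ContinuousLinearMap.adjoint A) := hsb_adjoint b b hA
  apply Summable.of_norm
  apply Summable.of_nonneg_of_le (fun i => norm_nonneg _) (fun i => ?_)
    ((hA'.add hB).mul_left (1 / 2 : ℝ))
  rw [ContinuousLinearMap.mul_apply, ← ContinuousLinearMap.adjoint_inner_left A]
  calc ‖⟪(ContinuousLinearMap.adjoint A) (b i), B (b i)⟫_ℂ‖
      ≤ ‖(ContinuousLinearMap.adjoint A) (b i)‖ * ‖B (b i)‖ := norm_inner_le_norm _ _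
    _ ≤ 1 / 2 * (‖(ContinuousLinearMap.adjoint A) (b i)‖ ^ 2 + ‖B (b i)‖ ^ 2) := by
        nlinarith [sq_nonneg (‖(ContinuousLinearMap.adjoint A) (b i)‖ - ‖B (b i)‖)]

lemma trace_mul_comm_hs {ι : Type*} (b : HilbertBasis ι ℂ H) {A B : H →L[ℂ] H}
    (hA : HSb b A) (hB : HSb b B) :
    traceB b (A * B) = traceB b (B * A) := by
  classical
  set F : ι → ι → ℂ := fun i j => ⟪b i, A (b j)⟫_ℂ * ⟪b j, B (b i)⟫_ℂ with hF
  have h1 : ∀ i, HasSum (fun j => F i j) ⟪b i, (A * B) (b i)⟫_ℂ := by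
    intro i
    have h := b.hasSum_inner_mul_inner ((ContinuousLinearMap.adjoint A) (b i)) (B (b i))
    have he : (fun j => ⟪(ContinuousLinearMap.adjoint A) (b i), b j⟫_ℂ * ⟪b j, B (b i)⟫_ℂ)
        = fun j => F i j := by
      ext j; rw [ContinuousLinearMap.adjoint_inner_left]
    rw [he] at h
    rwa [ContinuousLinearMap.adjoint_inner_left] at h
  have h2 : ∀ j, HasSum (fun i => F i j) ⟪b j, (B * A) (b j)⟫_ℂ := by
    intro j
    have h := b.hasSum_inner_mul_inner ((ContinuousLinearMap.adjoint B) (b j)) (A (b j))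
    have he : (fun i => ⟪(ContinuousLinearMap.adjoint B) (b j), b i⟫_ℂ * ⟪b i, A (b j)⟫_ℂ)
        = fun i => F i j := by
      ext i; rw [ContinuousLinearMap.adjoint_inner_left, mul_comm]
    rw [he] at h
    rwa [ContinuousLinearMap.adjoint_inner_left] at h
  have hA' : HSb b (ContinuousLinearMap.adjoint A) := hsb_adjoint b b hA
  -- summability of the double family
  have SA : Summable fun p : ι × ι => ‖⟪b p.2, A (b p.1)⟫_ℂ‖ ^ 2 := by
    rw [summable_prod_of_nonneg (fun p => sq_nonneg _)]
    refine ⟨fun j => (parseval b (A (b j))).summable, ?_⟩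
    have : (fun j => ∑' i, ‖⟪b i, A (b j)⟫_ℂ‖ ^ 2) = fun j => ‖A (b j)‖ ^ 2 := by
      ext j; exact (parseval b (A (b j))).tsum_eq
    rw [this]; exact hA
  have SA' : Summable fun p : ι × ι => ‖⟪b p.1, A (b p.2)⟫_ℂ‖ ^ 2 :=
    (Equiv.prodComm ι ι).summable_iff.mpr SA
  have SB : Summable fun p : ι × ι => ‖⟪b p.2, B (b p.1)⟫_ℂ‖ ^ 2 := by
    rw [summable_prod_of_nonneg (fun p => sq_nonneg _)]
    refine ⟨fun i => (parseval b (B (b i))).summable, ?_⟩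
    have : (fun i => ∑' j, ‖⟪b j, B (b i)⟫_ℂ‖ ^ 2) = fun i => ‖B (b i)‖ ^ 2 := by
      ext i; exact (parseval b (B (b i))).tsum_eq
    rw [this]; exact hB
  have hsum : Summable (Function.uncurry F) := by
    apply Summable.of_norm
    apply Summable.of_nonneg_of_le (fun p => norm_nonneg _) (fun p => ?_)
      ((SA'.add SB).mul_left (1 / 2 : ℝ))
    rw [Function.uncurry, hF]
    simp only
    rw [norm_mul]
    nlinarith [sq_nonneg (‖⟪b p.1, A (b p.2)⟫_ℂ‖ - ‖⟪b p.2, B (b p.1)⟫_ℂ‖),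
      norm_nonneg (⟪b p.1, A (b p.2)⟫_ℂ), norm_nonneg (⟪b p.2, B (b p.1)⟫_ℂ)]
  have swap := Summable.tsum_comm' hsum (fun i => (h1 i).summable) (fun j => (h2 j).summable)
  calc traceB b (A * B) = ∑' i, ∑' j, F i j :=
        tsum_congr fun i => ((h1 i).tsum_eq).symm
    _ = ∑' j, ∑' i, F i j := swap.symm
    _ = traceB b (B * A) := tsum_congr fun j => (h2 j).tsum_eq

lemma summable_diag_add {ι : Type*} {b : HilbertBasis ι ℂ H} {A B : H →L[ℂ] H}
    (hA : Summable fun i => ⟪b i, A (b i)⟫_ℂ) (hB : Summable fun i => ⟪b i, B (b i)⟫_ℂ) :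
    Summable fun i => ⟪b i, (A + B) (b i)⟫_ℂ := by
  simpa [ContinuousLinearMap.add_apply, inner_add_right] using hA.add hB

lemma summable_diag_sub {ι : Type*} {b : HilbertBasis ι ℂ H} {A B : H →L[ℂ] H}
    (hA : Summable fun i => ⟪b i, A (b i)⟫_ℂ) (hB : Summable fun i => ⟪b i, B (b i)⟫_ℂ) :
    Summable fun i => ⟪b i, (A - B) (b i)⟫_ℂ := by
  simpa [ContinuousLinearMap.sub_apply, inner_sub_right] using hA.sub hB

lemma trace_cyc {ι : Type*} (b : HilbertBasis ι ℂ H) {A B : H →L[ℂ] H} (D : H →L[ℂ] H)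
    (hA : HSb b A) (hB : HSb b B) :
    traceB b ((D * A) * B) = traceB b (A * (B * D)) := by
  have e1 : traceB b ((D * A) * B) = traceB b (B * (D * A)) :=
    trace_mul_comm_hs b (hsb_left_mul b hA D) hB
  have e2 : traceB b ((B * D) * A) = traceB b (A * (B * D)) :=
    trace_mul_comm_hs b (hsb_right_mul b hB D) hA
  rw [e1, ← e2, mul_assoc]

lemma traceB_neg {ι : Type*} (b : HilbertBasis ι ℂ H) (A : H →L[ℂ] H) :
    traceB b (-A) = -traceB b A := by
  unfold traceB
  rw [← tsum_neg]
  congr 1; ext i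
  simp [inner_neg_right]

lemma traceB_add {ι : Type*} (b : HilbertBasis ι ℂ H) {A B : H →L[ℂ] H}
    (hA : Summable fun i => ⟪b i, A (b i)⟫_ℂ) (hB : Summable fun i => ⟪b i, B (b i)⟫_ℂ) :
    traceB b (A + B) = traceB b A + traceB b B := by
  unfold traceB
  rw [← Summable.tsum_add hA hB]
  congr 1; ext i
  simp [inner_add_right]

lemma traceB_sub {ι : Type*} (b : HilbertBasis ι ℂ H) {A B : H →L[ℂ] H}
    (hA : Summable fun i => ⟪b i, A (b i)⟫_ℂ) (hB : Summable fun i => ⟪b i, B (b i)⟫_ℂ) :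
    traceB b (A - B) = traceB b A - traceB b B := by
  unfold traceB
  rw [← Summable.tsum_sub hA hB]
  congr 1; ext i
  simp [inner_sub_right]

lemma traceB_real_smul {ι : Type*} (b : HilbertBasis ι ℂ H) (c : ℝ) (A : H →L[ℂ] H) :
    traceB b (c • A) = c • traceB b A := by
  unfold traceB
  have : ∀ i : ι, ⟪b i, (c • A) (b i)⟫_ℂ = (c : ℂ) * ⟪b i, A (b i)⟫_ℂ := by
    intro i
    rw [ContinuousLinearMap.smul_apply]
    rw [show (c • (A (b i)) : H) = (c : ℂ) • A (b i) from (algebraMap_smul ℂ c (A (b i))).symm]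
    rw [inner_smul_right]
  rw [tsum_congr this, tsum_mul_left, Complex.real_smul]


lemma traceB_split8 {ι : Type*} (b : HilbertBasis ι ℂ H) {t1 t2 t3 t4 t5 t6 t7 t8 : H →L[ℂ] H}
    (s1 : Summable fun i => ⟪b i, t1 (b i)⟫_ℂ) (s2 : Summable fun i => ⟪b i, t2 (b i)⟫_ℂ)
    (s3 : Summable fun i => ⟪b i, t3 (b i)⟫_ℂ) (s4 : Summable fun i => ⟪b i, t4 (b i)⟫_ℂ)
    (s5 : Summable fun i => ⟪b i, t5 (b i)⟫_ℂ) (s6 : Summable fun i => ⟪b i, t6 (b i)⟫_ℂ)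
    (s7 : Summable fun i => ⟪b i, t7 (b i)⟫_ℂ) (s8 : Summable fun i => ⟪b i, t8 (b i)⟫_ℂ) :
    traceB b (t1 + t2 - t3 - t4 - t5 - t6 + t7 + t8)
      = traceB b t1 + traceB b t2 - traceB b t3 - traceB b t4 - traceB b t5
        - traceB b t6 + traceB b t7 + traceB b t8 := by
  have H1 := s1.hasSum; have H2 := s2.hasSum; have H3 := s3.hasSum
  have H4 := s4.hasSum; have H5 := s5.hasSum; have H6 := s6.hasSum
  have H7 := s7.hasSum; have H8 := s8.hasSum
  have comb := (((((((H1.add H2).sub H3).sub H4).sub H5).sub H6).add H7).add H8)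
  have heq : (fun i => ⟪b i, (t1 + t2 - t3 - t4 - t5 - t6 + t7 + t8) (b i)⟫_ℂ)
      = fun i => ⟪b i, t1 (b i)⟫_ℂ + ⟪b i, t2 (b i)⟫_ℂ - ⟪b i, t3 (b i)⟫_ℂ - ⟪b i, t4 (b i)⟫_ℂ
        - ⟪b i, t5 (b i)⟫_ℂ - ⟪b i, t6 (b i)⟫_ℂ + ⟪b i, t7 (b i)⟫_ℂ + ⟪b i, t8 (b i)⟫_ℂ := by
    funext i
    simp [ContinuousLinearMap.add_apply, ContinuousLinearMap.sub_apply, inner_add_right,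
      inner_sub_right]
  unfold traceB
  rw [heq]
  exact comb.tsum_eq


lemma traceB_antisym {ι : Type*} (b : HilbertBasis ι ℂ H) (A B : H →L[ℂ] H) :
    traceB b (A - B) = -traceB b (B - A) := by
  rw [← neg_sub, traceB_neg]

section Proj
variable {P : H →L[ℂ] H} (hP : P * P = P)
include hP

lemma hsb_neg {ι : Type*} (b : HilbertBasis ι ℂ H) {A : H →L[ℂ] H} (h : HSb b A) :
    HSb b (-A) := by
  unfold HSb at *
  simpa [ContinuousLinearMap.neg_apply] using h

lemma hsb_p_of_comm {ι : Type*} (b : HilbertBasis ι ℂ H) {X : H →L[ℂ] H}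
    (h : HSb b (X * P - P * X)) : HSb b (P * X * (1 - P)) := by
  have e : P * X * (1 - P) = -(P * (X * P - P * X)) := by
    rw [mul_sub P (X * P) (P * X), ← mul_assoc P P X, hP]
    noncomm_ring
  rw [e]
  exact hsb_neg hP b (hsb_left_mul b h P)

lemma hsb_q_of_comm {ι : Type*} (b : HilbertBasis ι ℂ H) {X : H →L[ℂ] H}
    (h : HSb b (X * P - P * X)) : HSb b ((1 - P) * X * P) := by
  have e : (1 - P) * X * P = (X * P - P * X) * P := by
    rw [sub_mul (X * P) (P * X) P, mul_assoc X P P, hP]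
    noncomm_ring
  rw [e]
  exact hsb_right_mul b h P

-- key block decompositions
lemma block_p (A B : H →L[ℂ] H) :
    P * (A * B) * (1 - P)
      = (P * A * P) * (P * B * (1 - P)) + (P * A * (1 - P)) * ((1 - P) * B * (1 - P)) := by
  have hP' : ∀ W : H →L[ℂ] H, P * (P * W) = P * W := fun W => by rw [← mul_assoc, hP]
  have hQ' : ∀ W : H →L[ℂ] H, (1 - P) * ((1 - P) * W) = (1 - P) * W := fun W => by
    rw [← mul_assoc, show ((1 - P) * (1 - P) : H →L[ℂ] H) = 1 - P by
      rw [mul_sub, mul_one, sub_mul, one_mul, hP, sub_self, sub_zero]]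
  simp only [mul_assoc, hP', hQ']
  noncomm_ring

lemma block_q (A B : H →L[ℂ] H) :
    (1 - P) * (A * B) * P
      = ((1 - P) * A * (1 - P)) * ((1 - P) * B * P) + ((1 - P) * A * P) * (P * B * P) := by
  have hP' : ∀ W : H →L[ℂ] H, P * (P * W) = P * W := fun W => by rw [← mul_assoc, hP]
  have hQ' : ∀ W : H →L[ℂ] H, (1 - P) * ((1 - P) * W) = (1 - P) * W := fun W => by
    rw [← mul_assoc, show ((1 - P) * (1 - P) : H →L[ℂ] H) = 1 - P by
      rw [mul_sub, mul_one, sub_mul, one_mul, hP, sub_self, sub_zero]]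
  simp only [mul_assoc, hP', hQ']
  noncomm_ring

end Proj

section Bracket
variable {P : H →L[ℂ] H} (hP : P * P = P)
include hP

lemma bracket_expand {ι : Type*} (b : HilbertBasis ι ℂ H) (X Y Z : H →L[ℂ] H)
    (hpX : HSb b (P * X * (1 - P))) (hqX : HSb b ((1 - P) * X * P))
    (hpY : HSb b (P * Y * (1 - P))) (hqY : HSb b ((1 - P) * Y * P))
    (hpZ : HSb b (P * Z * (1 - P))) (hqZ : HSb b ((1 - P) * Z * P)) :
    traceB b ((P * (X * Y - Y * X) * (1 - P)) * ((1 - P) * Z * P)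
        - (P * Z * (1 - P)) * ((1 - P) * (X * Y - Y * X) * P))
      = traceB b ((P * X * P * (P * Y * (1 - P))) * ((1 - P) * Z * P))
      + traceB b ((P * X * (1 - P)) * (((1 - P) * Y * (1 - P)) * ((1 - P) * Z * P)))
      - traceB b ((P * Y * P * (P * X * (1 - P))) * ((1 - P) * Z * P))
      - traceB b ((P * Y * (1 - P)) * (((1 - P) * X * (1 - P)) * ((1 - P) * Z * P)))
      - traceB b ((P * Z * (1 - P)) * (((1 - P) * X * (1 - P)) * ((1 - P) * Y * P)))
      - traceB b ((P * Z * (1 - P)) * (((1 - P) * X * P) * (P * Y * P)))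
      + traceB b ((P * Z * (1 - P)) * (((1 - P) * Y * (1 - P)) * ((1 - P) * X * P)))
      + traceB b ((P * Z * (1 - P)) * (((1 - P) * Y * P) * (P * X * P))) := by
  have hp : P * (X * Y - Y * X) * (1 - P)
      = (P * X * P) * (P * Y * (1 - P)) + (P * X * (1 - P)) * ((1 - P) * Y * (1 - P))
        - ((P * Y * P) * (P * X * (1 - P)) + (P * Y * (1 - P)) * ((1 - P) * X * (1 - P))) := by
    rw [mul_sub P (X * Y) (Y * X), sub_mul, block_p hP X Y, block_p hP Y X]
  have hq : (1 - P) * (X * Y - Y * X) * P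
      = ((1 - P) * X * (1 - P)) * ((1 - P) * Y * P) + ((1 - P) * X * P) * (P * Y * P)
        - (((1 - P) * Y * (1 - P)) * ((1 - P) * X * P) + ((1 - P) * Y * P) * (P * X * P)) := by
    rw [mul_sub (1 - P) (X * Y) (Y * X), sub_mul, block_q hP X Y, block_q hP Y X]
  -- the eight summands, each written as a product of two Hilbert–Schmidt operators
  set t1 := (P * X * P * (P * Y * (1 - P))) * ((1 - P) * Z * P) with ht1
  set t2 := (P * X * (1 - P)) * (((1 - P) * Y * (1 - P)) * ((1 - P) * Z * P)) with ht2
  set t3 := (P * Y * P * (P * X * (1 - P))) * ((1 - P) * Z * P) with ht3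
  set t4 := (P * Y * (1 - P)) * (((1 - P) * X * (1 - P)) * ((1 - P) * Z * P)) with ht4
  set t5 := (P * Z * (1 - P)) * (((1 - P) * X * (1 - P)) * ((1 - P) * Y * P)) with ht5
  set t6 := (P * Z * (1 - P)) * (((1 - P) * X * P) * (P * Y * P)) with ht6
  set t7 := (P * Z * (1 - P)) * (((1 - P) * Y * (1 - P)) * ((1 - P) * X * P)) with ht7
  set t8 := (P * Z * (1 - P)) * (((1 - P) * Y * P) * (P * X * P)) with ht8
  have hE : (P * (X * Y - Y * X) * (1 - P)) * ((1 - P) * Z * P)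
      - (P * Z * (1 - P)) * ((1 - P) * (X * Y - Y * X) * P)
      = t1 + t2 - t3 - t4 - t5 - t6 + t7 + t8 := by
    rw [hp, hq, ht1, ht2, ht3, ht4, ht5, ht6, ht7, ht8]
    noncomm_ring
  have s1 : Summable fun i => ⟪b i, t1 (b i)⟫_ℂ :=
    diag_summable b (hsb_left_mul b hpY (P * X * P)) hqZ
  have s2 : Summable fun i => ⟪b i, t2 (b i)⟫_ℂ :=
    diag_summable b hpX (hsb_left_mul b hqZ ((1 - P) * Y * (1 - P)))
  have s3 : Summable fun i => ⟪b i, t3 (b i)⟫_ℂ :=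
    diag_summable b (hsb_left_mul b hpX (P * Y * P)) hqZ
  have s4 : Summable fun i => ⟪b i, t4 (b i)⟫_ℂ :=
    diag_summable b hpY (hsb_left_mul b hqZ ((1 - P) * X * (1 - P)))
  have s5 : Summable fun i => ⟪b i, t5 (b i)⟫_ℂ :=
    diag_summable b hpZ (hsb_left_mul b hqY ((1 - P) * X * (1 - P)))
  have s6 : Summable fun i => ⟪b i, t6 (b i)⟫_ℂ :=
    diag_summable b hpZ (hsb_right_mul b hqX (P * Y * P))
  have s7 : Summable fun i => ⟪b i, t7 (b i)⟫_ℂ :=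
    diag_summable b hpZ (hsb_left_mul b hqX ((1 - P) * Y * (1 - P)))
  have s8 : Summable fun i => ⟪b i, t8 (b i)⟫_ℂ :=
    diag_summable b hpZ (hsb_right_mul b hqY (P * X * P))
  rw [hE]
  exact traceB_split8 b s1 s2 s3 s4 s5 s6 s7 s8

end Bracket


end Lemmas

set_option maxHeartbeats 2000000 in
/-- The Schwinger term is a Lie algebra 2-cocycle on `u_res(H)`: it is real-bilinear,
antisymmetric, and satisfies the cocycle (Jacobi-type) identity. -/
theorem schwinger_is_cocycle {H : Type*} [NormedAddCommGroup H] [InnerProductSpace ℂ H]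
    [CompleteSpace H] [TopologicalSpace.SeparableSpace H]
    (P : H →L[ℂ] H) (hP_proj : P * P = P) (hP_sa : IsSelfAdjoint P)
    {ι : Type*} (b : HilbertBasis ι ℂ H) :
    (∀ X X' Y : H →L[ℂ] H, MemURes P X → MemURes P X' → MemURes P Y →
      schwinger b P (X + X') Y = schwinger b P X Y + schwinger b P X' Y) ∧
    (∀ (c : ℝ) (X Y : H →L[ℂ] H), MemURes P X → MemURes P Y →
      schwinger b P (c • X) Y = c • schwinger b P X Y) ∧
    (∀ X Y : H →L[ℂ] H, MemURes P X → MemURes P Y →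
      schwinger b P X Y = -schwinger b P Y X) ∧
    (∀ X Y Z : H →L[ℂ] H, MemURes P X → MemURes P Y → MemURes P Z →
      schwinger b P (X * Y - Y * X) Z + schwinger b P (Y * Z - Z * Y) X
        + schwinger b P (Z * X - X * Z) Y = 0) := by
  have hs : ∀ X : H →L[ℂ] H, MemURes P X →
      HSb b (P * X * (1 - P)) ∧ HSb b ((1 - P) * X * P) := by
    intro X hX
    obtain ⟨ι₀, b₀, hsum⟩ := hX.2
    have h := hsb_congr b₀ b hsum
    exact ⟨hsb_p_of_comm hP_proj b h, hsb_q_of_comm hP_proj b h⟩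
  refine ⟨?_, ?_, ?_, ?_⟩
  · intro X X' Y hX hX' hY
    obtain ⟨hpX, hqX⟩ := hs X hX
    obtain ⟨hpX', hqX'⟩ := hs X' hX'
    obtain ⟨hpY, hqY⟩ := hs Y hY
    have hop : (P * (X + X') * (1 - P)) * ((1 - P) * Y * P)
        - (P * Y * (1 - P)) * ((1 - P) * (X + X') * P)
        = ((P * X * (1 - P)) * ((1 - P) * Y * P) - (P * Y * (1 - P)) * ((1 - P) * X * P))
          + ((P * X' * (1 - P)) * ((1 - P) * Y * P)
            - (P * Y * (1 - P)) * ((1 - P) * X' * P)) := by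
      noncomm_ring
    unfold schwinger
    rw [hop]
    exact traceB_add b
      (summable_diag_sub (diag_summable b hpX hqY) (diag_summable b hpY hqX))
      (summable_diag_sub (diag_summable b hpX' hqY) (diag_summable b hpY hqX'))
  · intro c X Y hX hY
    have hop : (P * (c • X) * (1 - P)) * ((1 - P) * Y * P)
        - (P * Y * (1 - P)) * ((1 - P) * (c • X) * P)
        = c • ((P * X * (1 - P)) * ((1 - P) * Y * P)
            - (P * Y * (1 - P)) * ((1 - P) * X * P)) := by
      simp only [mul_smul_comm, smul_mul_assoc, smul_sub]
    unfold schwinger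
    rw [hop]
    exact traceB_real_smul b c _
  · intro X Y hX hY
    unfold schwinger
    exact traceB_antisym b _ _
  · intro X Y Z hX hY hZ
    obtain ⟨hpX, hqX⟩ := hs X hX
    obtain ⟨hpY, hqY⟩ := hs Y hY
    obtain ⟨hpZ, hqZ⟩ := hs Z hZ
    have e1 := bracket_expand hP_proj b X Y Z hpX hqX hpY hqY hpZ hqZ
    have e2 := bracket_expand hP_proj b Y Z X hpY hqY hpZ hqZ hpX hqX
    have e3 := bracket_expand hP_proj b Z X Y hpZ hqZ hpX hqX hpY hqY
    have c1 := trace_cyc b (P * X * P) hpY hqZ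
    have c2 := trace_cyc b (P * Y * P) hpX hqZ
    have c3 := trace_cyc b (P * Y * P) hpZ hqX
    have c4 := trace_cyc b (P * Z * P) hpY hqX
    have c5 := trace_cyc b (P * Z * P) hpX hqY
    have c6 := trace_cyc b (P * X * P) hpZ hqY
    unfold schwinger
    rw [e1, e2, e3, c1, c2, c3, c4, c5, c6]
    ring

end
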